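/- Let W be a 4-dimensional real vector space, W = Π₁ ⊕ Π₂ with dim Π₁ = dim Π₂ = 2, let F : Π₁ → Π₂ be a linear isomorphism and L : Π₁ → Π₁ a linear automorphism that is not a real scalar multiple of the identity, and set Π₃ = graph(F), Π₄ = graph(F ∘ L). If J and J' are complex structures on W such that each of Π₁, Π₂, Π₃, Π₄ is a complex subspace for both J and J', then J' = J or J' = −J. -/

import Mathlib

/-- If `A A x = -x` and `v ≠ 0`, then `v, A v` are linearly independent over `ℝ`. -/
lemma aux_indep {V : Type*} [AddCommGroup V] [Module ℝ V] (A : V →ₗ[ℝ] V)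
    (hA : ∀ x, A (A x) = -x) (v : V) (hv : v ≠ 0) :
    LinearIndependent ℝ ![v, A v] := by
  rw [LinearIndependent.pair_iff]
  intro s t hst
  have h2 : s • A v + t • (-v) = 0 := by
    have := congrArg A hst
    simpa [hA] using this
  have h3 : (s ^ 2 + t ^ 2) • v = 0 := by
    have := congrArg (fun w => s • w) hst
    have h4 := congrArg (fun w => t • w) h2
    simp only [smul_add, smul_zero, smul_smul, smul_neg] at this h4
    have := congrArg₂ (fun a b => a - b) this h4
    simp only [sub_zero] at this
    rw [← this, add_smul]
    module
  have hst2 : s ^ 2 + t ^ 2 = 0 := by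
    by_contra h
    exact hv (by simpa [h] using smul_eq_zero.mp h3)
  constructor <;> nlinarith [sq_nonneg s, sq_nonneg t]

/-- In a 2-dimensional real space, anything commuting with a complex structure `A`
is of the form `s • id + t • A`. -/
lemma aux_comm {V : Type*} [AddCommGroup V] [Module ℝ V] (hV : Module.finrank ℝ V = 2)
    (A : V →ₗ[ℝ] V) (hA : ∀ x, A (A x) = -x)
    (L : V →ₗ[ℝ] V) (hcomm : ∀ x, A (L x) = L (A x)) :
    ∃ s t : ℝ, L = s • LinearMap.id + t • A := by
  have : FiniteDimensional ℝ V := FiniteDimensional.of_finrank_eq_succ hV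
  have : Nontrivial V := by
    have : 0 < Module.finrank ℝ V := by omega
    exact Module.nontrivial_of_finrank_pos this
  obtain ⟨v, hv⟩ := exists_ne (0 : V)
  have hind : LinearIndependent ℝ ![v, A v] := aux_indep A hA v hv
  have hcard : Fintype.card (Fin 2) = Module.finrank ℝ V := by simp [hV]
  let b : Module.Basis (Fin 2) ℝ V := basisOfLinearIndependentOfCardEqFinrank hind hcard
  have hb0 : b 0 = v := by simp [b, coe_basisOfLinearIndependentOfCardEqFinrank]
  have hb1 : b 1 = A v := by simp [b, coe_basisOfLinearIndependentOfCardEqFinrank]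
  set s := b.repr (L v) 0 with hs
  set t := b.repr (L v) 1 with ht
  have hLv : L v = s • v + t • A v := by
    have := b.sum_repr (L v)
    rw [Fin.sum_univ_two, hb0, hb1] at this
    exact this.symm
  refine ⟨s, t, ?_⟩
  apply b.ext
  intro i
  fin_cases i
  · simpa [hb0] using hLv
  · have hb1' : b ⟨1, by omega⟩ = A v := hb1
    rw [hb1']
    have h5 : L (A v) = A (L v) := (hcomm v).symm
    rw [h5, hLv]
    simp [hA v, smul_neg]

/-- If the graph of `G : P₁ → P₂` is `J`-invariant then `J (G x) = G (J x)`. -/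
lemma aux_graph {W : Type*} [AddCommGroup W] [Module ℝ W]
    (P₁ P₂ : Submodule ℝ W) (hd : Disjoint P₁ P₂)
    (G : P₁ →ₗ[ℝ] P₂) (J : W →ₗ[ℝ] W)
    (hJ1 : ∀ x ∈ P₁, J x ∈ P₁) (hJ2 : ∀ x ∈ P₂, J x ∈ P₂)
    (hJ3 : ∀ x ∈ LinearMap.range (P₁.subtype + P₂.subtype ∘ₗ G),
      J x ∈ LinearMap.range (P₁.subtype + P₂.subtype ∘ₗ G))
    (x : P₁) : J (G x : W) = (G (J.restrict hJ1 x) : W) := by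
  obtain ⟨y, hy⟩ := hJ3 _ (LinearMap.mem_range_self _ x)
  simp only [LinearMap.add_apply, LinearMap.coe_comp, Function.comp_apply,
    Submodule.coe_subtype, map_add] at hy
  have hd' : (y : W) - J x = 0 := by
    have hmem1 : (y : W) - J x ∈ P₁ := sub_mem y.2 (hJ1 _ x.2)
    have hmem2 : (y : W) - J x ∈ P₂ := by
      have heq : (y : W) - J x = J (G x : W) - (G y : W) := by
        rw [sub_eq_sub_iff_add_eq_add, hy]; abel
      rw [heq]; exact sub_mem (hJ2 _ (G x).2) (G y).2
    exact (Submodule.disjoint_def.mp hd) _ hmem1 hmem2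
  have hyx : y = J.restrict hJ1 x := by
    apply Subtype.ext
    rw [LinearMap.restrict_coe_apply]
    exact sub_eq_zero.mp hd'
  rw [← hyx]
  have : J ((x : W)) = (y : W) := (sub_eq_zero.mp hd').symm
  calc J (G x : W) = ((y : W) + (G y : W)) - J (x : W) := by rw [hy]; abel
    _ = (G y : W) := by rw [this]; abel




/-- Let `W` be a 4-dimensional real vector space, `W = P₁ ⊕ P₂` with
`dim P₁ = dim P₂ = 2`, let `F : P₁ → P₂` be a linear isomorphism and `L : P₁ → P₁`
a linear automorphism that is not a real scalar multiple of the identity, and set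
`P₃ = graph F`, `P₄ = graph (F ∘ L)`. If `J` and `J'` are complex structures on `W`
such that each of `P₁, P₂, P₃, P₄` is a complex subspace for both `J` and `J'`,
then `J' = J` or `J' = -J`. -/
theorem stmt_0 (W : Type*) [AddCommGroup W] [Module ℝ W]
    (hW : Module.finrank ℝ W = 4)
    (P₁ P₂ : Submodule ℝ W)
    (hP₁ : Module.finrank ℝ P₁ = 2) (hP₂ : Module.finrank ℝ P₂ = 2)
    (hcompl : IsCompl P₁ P₂)
    (F : P₁ →ₗ[ℝ] P₂) (hF : Function.Bijective F)
    (L : P₁ →ₗ[ℝ] P₁) (hL : Function.Bijective L)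
    (hLid : ∀ c : ℝ, L ≠ c • LinearMap.id)
    (P₃ P₄ : Submodule ℝ W)
    (hP₃ : P₃ = LinearMap.range (P₁.subtype + P₂.subtype ∘ₗ F))
    (hP₄ : P₄ = LinearMap.range (P₁.subtype + P₂.subtype ∘ₗ (F ∘ₗ L)))
    (J J' : W →ₗ[ℝ] W)
    (hJ : ∀ x, J (J x) = -x) (hJ' : ∀ x, J' (J' x) = -x)
    (hJ1 : ∀ x ∈ P₁, J x ∈ P₁) (hJ2 : ∀ x ∈ P₂, J x ∈ P₂)
    (hJ3 : ∀ x ∈ P₃, J x ∈ P₃) (hJ4 : ∀ x ∈ P₄, J x ∈ P₄)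
    (hJ'1 : ∀ x ∈ P₁, J' x ∈ P₁) (hJ'2 : ∀ x ∈ P₂, J' x ∈ P₂)
    (hJ'3 : ∀ x ∈ P₃, J' x ∈ P₃) (hJ'4 : ∀ x ∈ P₄, J' x ∈ P₄) :
    J' = J ∨ J' = -J := by
  rw [hP₃] at hJ3 hJ'3
  rw [hP₄] at hJ4 hJ'4
  have hd : Disjoint P₁ P₂ := hcompl.disjoint
  set A : P₁ →ₗ[ℝ] P₁ := J.restrict hJ1 with hAdef
  set A' : P₁ →ₗ[ℝ] P₁ := J'.restrict hJ'1 with hA'def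
  have hAsq : ∀ x : P₁, A (A x) = -x := by
    intro x
    apply Subtype.ext
    simp [hAdef, LinearMap.restrict_coe_apply, hJ]
  have hA'sq : ∀ x : P₁, A' (A' x) = -x := by
    intro x
    apply Subtype.ext
    simp [hA'def, LinearMap.restrict_coe_apply, hJ']
  have hGF : ∀ x : P₁, J (F x : W) = (F (A x) : W) :=
    fun x => aux_graph P₁ P₂ hd F J hJ1 hJ2 hJ3 x
  have hGF' : ∀ x : P₁, J' (F x : W) = (F (A' x) : W) :=
    fun x => aux_graph P₁ P₂ hd F J' hJ'1 hJ'2 hJ'3 x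
  have hGFL : ∀ x : P₁, J (F (L x) : W) = (F (L (A x)) : W) := by
    intro x
    have h := aux_graph P₁ P₂ hd (F ∘ₗ L) J hJ1 hJ2 hJ4 x
    simpa using h
  have hGFL' : ∀ x : P₁, J' (F (L x) : W) = (F (L (A' x)) : W) := by
    intro x
    have h := aux_graph P₁ P₂ hd (F ∘ₗ L) J' hJ'1 hJ'2 hJ'4 x
    simpa using h
  have hcomm : ∀ x : P₁, A (L x) = L (A x) := by
    intro x
    have key : ((F (A (L x)) : P₂) : W) = ((F (L (A x)) : P₂) : W) := by
      rw [← hGF (L x), hGFL x]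
    exact hF.injective (Subtype.coe_injective key)
  have hcomm' : ∀ x : P₁, A' (L x) = L (A' x) := by
    intro x
    have key : ((F (A' (L x)) : P₂) : W) = ((F (L (A' x)) : P₂) : W) := by
      rw [← hGF' (L x), hGFL' x]
    exact hF.injective (Subtype.coe_injective key)
  obtain ⟨s, t, hst⟩ := aux_comm hP₁ A hAsq L hcomm
  obtain ⟨s', t', hst'⟩ := aux_comm hP₁ A' hA'sq L hcomm'
  have ht : t ≠ 0 := by
    rintro rfl
    exact hLid s (by simpa using hst)
  have ht' : t' ≠ 0 := by
    rintro rfl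
    exact hLid s' (by simpa using hst')
  set α : ℝ := (s - s') / t' with hαdef
  set β : ℝ := t / t' with hβdef
  have hA'pt : ∀ x : P₁, A' x = α • x + β • A x := by
    intro x
    have h1 : s • x + t • A x = s' • x + t' • A' x := by
      have e1 : L x = s • x + t • A x := by rw [hst]; simp
      have e2 : L x = s' • x + t' • A' x := by rw [hst']; simp
      rw [← e1, ← e2]
    have h2 : t' • A' x = (s - s') • x + t • A x := by
      rw [sub_smul]
      linear_combination (norm := module) (-1 : ℝ) • h1
    have h3 := congrArg (fun y => (t'⁻¹ : ℝ) • y) h2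
    simp only [smul_add, smul_smul] at h3
    rw [inv_mul_cancel₀ ht', one_smul] at h3
    rw [h3, hαdef, hβdef]
    rw [div_eq_inv_mul, div_eq_inv_mul]
  have : FiniteDimensional ℝ P₁ := FiniteDimensional.of_finrank_eq_succ hP₁
  have : Nontrivial P₁ := by
    have : 0 < Module.finrank ℝ P₁ := by omega
    exact Module.nontrivial_of_finrank_pos this
  obtain ⟨v, hv⟩ := exists_ne (0 : P₁)
  have hind : LinearIndependent ℝ ![v, A v] := aux_indep A hAsq v hv
  have hev : (α ^ 2 - β ^ 2 + 1) • v + (2 * α * β) • A v = 0 := by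
    have h1 := hA'sq v
    have h2 : A' (A' v) = (α ^ 2 - β ^ 2) • v + (2 * α * β) • A v := by
      rw [hA'pt v, map_add, map_smul, map_smul, hA'pt v, hA'pt (A v), hAsq v]
      match_scalars <;> ring
    rw [h2] at h1
    linear_combination (norm := module) h1
  obtain ⟨hc1, hc2⟩ := (LinearIndependent.pair_iff.mp hind) _ _ hev
  have hα : α = 0 := by
    rcases mul_eq_zero.mp (by linarith : (2 * α) * β = 0) with h | h
    · linarith
    · exact absurd h (div_ne_zero ht ht')
  have hβ2 : β * β = 1 := by nlinarith
  have hA'A : ∀ x : P₁, A' x = β • A x := by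
    intro x
    rw [hA'pt x, hα, zero_smul, zero_add]
  have hall : ∀ w : W, J' w = β • J w := by
    have hmem1 : ∀ p ∈ P₁, J' p = β • J p := by
      intro p hp
      have h := congrArg (Subtype.val) (hA'A ⟨p, hp⟩)
      simpa [hAdef, hA'def, LinearMap.restrict_coe_apply] using h
    have hmem2 : ∀ q ∈ P₂, J' q = β • J q := by
      intro q hq
      obtain ⟨x, hx⟩ := hF.surjective ⟨q, hq⟩
      have hq' : q = ((F x : P₂) : W) := by rw [hx]
      rw [hq', hGF' x, hGF x, hA'A x, map_smul]
      simp
    intro w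
    have hw : w ∈ P₁ ⊔ P₂ := by rw [hcompl.sup_eq_top]; trivial
    obtain ⟨p, hp, q, hq, rfl⟩ := Submodule.mem_sup.mp hw
    rw [map_add, map_add, hmem1 p hp, hmem2 q hq, smul_add]
  rcases mul_self_eq_one_iff.mp hβ2 with h | h
  · left
    ext w
    rw [hall w, h, one_smul]
  · right
    ext w
    rw [hall w, h]
    simp
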